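/- Let 0 < ε ≤ 1/4 and let n ≥ 2. Model the interval-arithmetic Clenshaw evaluation on X = [1/2 − ε, 1/2 + ε] of the polynomial with Chebyshev coefficients a_n = 1 and a_i = 0 for i < n by the sets U_{n+1} = {0}, U_n = {1}, and U_k = { 2·x·u − v : x ∈ X, u ∈ U_{k+1}, v ∈ U_{k+2} } for k = n−1 down to 1. Then for every k with 1 ≤ k ≤ n−1, the width of U_{n−k} is at least 4ε·F_k, where F_k is the k-th Fibonacci number (F_1 = F_2 = 1); i.e. sSup U_{n−k} − sInf U_{n−k} ≥ 4ε·F_k. In particular the width of the interval computed by the interval Clenshaw algorithm grows exponentially in n. -/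
import Mathlib


open Set

/-- The one-step interval Clenshaw set. -/
def clenshawSet (ε : ℝ) (S T : Set ℝ) : Set ℝ :=
  {w : ℝ | ∃ x ∈ Set.Icc (1 / 2 - ε) (1 / 2 + ε),
        ∃ u ∈ S, ∃ v ∈ T, w = 2 * x * u - v}

lemma clenshaw_step (ε : ℝ) (hε₁ : 0 < ε) (hε₂ : ε ≤ 1 / 4) (S T : Set ℝ)
    (hS : S.Nonempty) (hT : T.Nonempty)
    (hSa : BddAbove S) (hSb : BddBelow S) (hTa : BddAbove T) (hTb : BddBelow T) :
    (clenshawSet ε S T).Nonempty ∧ BddAbove (clenshawSet ε S T) ∧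
      BddBelow (clenshawSet ε S T) ∧
      sSup (clenshawSet ε S T) - sInf (clenshawSet ε S T) ≥
        (1 + 2 * ε) * (sSup S - sInf S) + (sSup T - sInf T) := by
  obtain ⟨u0, hu0⟩ := hS
  obtain ⟨v0, hv0⟩ := hT
  obtain ⟨MS, hMS⟩ := hSa
  obtain ⟨mS, hmS⟩ := hSb
  obtain ⟨MT, hMT⟩ := hTa
  obtain ⟨mT, hmT⟩ := hTb
  have hne : (clenshawSet ε S T).Nonempty := by
    refine ⟨2 * (1/2) * u0 - v0, ⟨1/2, ⟨by linarith, by linarith⟩, u0, hu0, v0, hv0, rfl⟩⟩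
  -- boundedness
  have hbound : ∀ w ∈ clenshawSet ε S T,
      -(2 * (|mS| + |MS|) + (|mT| + |MT|)) ≤ w ∧ w ≤ 2 * (|mS| + |MS|) + (|mT| + |MT|) := by
    rintro w ⟨x, hx, u, hu, v, hv, rfl⟩
    have hx0 : 0 ≤ x := by have := hx.1; linarith
    have hx1 : x ≤ 1 := by have := hx.2; linarith
    have huabs : |u| ≤ |mS| + |MS| := by
      have h1 := hMS hu
      have h2 := hmS hu
      have := le_abs_self MS
      have := neg_abs_le mS
      have := abs_nonneg MS
      have := abs_nonneg mS
      rw [abs_le]; constructor <;> linarith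
    have hvabs : |v| ≤ |mT| + |MT| := by
      have h1 := hMT hv
      have h2 := hmT hv
      have := le_abs_self MT
      have := neg_abs_le mT
      have := abs_nonneg MT
      have := abs_nonneg mT
      rw [abs_le]; constructor <;> linarith
    have hwa : |2 * x * u - v| ≤ 2 * (|mS| + |MS|) + (|mT| + |MT|) := by
      have : |2 * x * u| ≤ 2 * (|mS| + |MS|) := by
        rw [abs_mul, abs_mul]
        have : |(2:ℝ)| = 2 := by norm_num
        rw [this]
        have hxa : |x| = x := abs_of_nonneg hx0
        rw [hxa]
        nlinarith [abs_nonneg u, abs_nonneg x]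
      calc |2 * x * u - v| ≤ |2 * x * u| + |v| := abs_sub _ _
        _ ≤ 2 * (|mS| + |MS|) + (|mT| + |MT|) := by linarith
    exact abs_le.mp hwa
  have hDa : BddAbove (clenshawSet ε S T) :=
    ⟨2 * (|mS| + |MS|) + (|mT| + |MT|), fun w hw => (hbound w hw).2⟩
  have hDb : BddBelow (clenshawSet ε S T) :=
    ⟨-(2 * (|mS| + |MS|) + (|mT| + |MT|)), fun w hw => (hbound w hw).1⟩
  refine ⟨hne, hDa, hDb, ?_⟩
  have hc : (0:ℝ) < 1 + 2 * ε := by linarith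
  -- key membership: for u ∈ S, v ∈ T, (1+2ε)u - v ∈ D and (1-2ε)u - v ∈ D
  have hmemhi : ∀ u ∈ S, ∀ v ∈ T, (1 + 2*ε) * u - v ∈ clenshawSet ε S T := by
    intro u hu v hv
    exact ⟨1/2 + ε, ⟨by linarith, le_refl _⟩, u, hu, v, hv, by ring⟩
  -- sSup D ≥ (1+2ε) sSup S - sInf T
  have hsup : (1 + 2*ε) * sSup S - sInf T ≤ sSup (clenshawSet ε S T) := by
    have key : ∀ v ∈ T, (1 + 2*ε) * sSup S - sSup (clenshawSet ε S T) ≤ v := by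
      intro v hv
      have h1 : sSup S ≤ (sSup (clenshawSet ε S T) + v) / (1 + 2*ε) := by
        apply csSup_le ⟨u0, hu0⟩
        intro u hu
        rw [le_div_iff₀ hc]
        have := le_csSup hDa (hmemhi u hu v hv)
        nlinarith
      rw [le_div_iff₀ hc] at h1
      nlinarith
    have := le_csInf ⟨v0, hv0⟩ key
    linarith [this, (le_csInf ⟨v0, hv0⟩ key)]
  -- sInf D ≤ (1+2ε) sInf S - sSup T
  have hinf : sInf (clenshawSet ε S T) ≤ (1 + 2*ε) * sInf S - sSup T := by
    have key : ∀ v ∈ T, v ≤ (1 + 2*ε) * sInf S - sInf (clenshawSet ε S T) := by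
      intro v hv
      have h1 : (sInf (clenshawSet ε S T) + v) / (1 + 2*ε) ≤ sInf S := by
        apply le_csInf ⟨u0, hu0⟩
        intro u hu
        rw [div_le_iff₀ hc]
        have := csInf_le hDb (hmemhi u hu v hv)
        nlinarith
      rw [div_le_iff₀ hc] at h1
      nlinarith
    have := csSup_le ⟨v0, hv0⟩ key
    linarith
  nlinarith [hsup, hinf]

/-- Exponential growth of interval widths in the naive interval Clenshaw
algorithm on `X = [1/2 − ε, 1/2 + ε]`, for the coefficients `aₙ = 1`,
`aᵢ = 0` for `i < n`: the width of `U_{n−k}` is at least `4ε·F_k`. -/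
theorem interval_clenshaw_exponential_growth (ε : ℝ) (hε₁ : 0 < ε) (hε₂ : ε ≤ 1 / 4)
    (n : ℕ) (hn : 2 ≤ n) (U : ℕ → Set ℝ)
    (hUn1 : U (n + 1) = {0}) (hUn : U n = {1})
    (hUrec : ∀ k, 1 ≤ k → k ≤ n - 1 →
      U k = {w : ℝ | ∃ x ∈ Set.Icc (1 / 2 - ε) (1 / 2 + ε),
        ∃ u ∈ U (k + 1), ∃ v ∈ U (k + 2), w = 2 * x * u - v}) :
    ∀ k, 1 ≤ k → k ≤ n - 1 →
      sSup (U (n - k)) - sInf (U (n - k)) ≥ 4 * ε * (Nat.fib k : ℝ) := by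
  have key : ∀ k, k ≤ n - 1 →
      (U (n - k)).Nonempty ∧ BddAbove (U (n - k)) ∧ BddBelow (U (n - k)) ∧
        sSup (U (n - k)) - sInf (U (n - k)) ≥ 4 * ε * (Nat.fib k : ℝ) := by
    intro k
    induction k using Nat.strong_induction_on with
    | _ k ih =>
      intro hk
      match k with
      | 0 =>
        rw [Nat.sub_zero, hUn]
        refine ⟨⟨1, rfl⟩, bddAbove_singleton, bddBelow_singleton, ?_⟩
        simp [csSup_singleton, csInf_singleton]
      | 1 =>
        have h := hUrec (n - 1) (by omega) le_rfl
        have e1 : n - 1 + 1 = n := by omega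
        have e2 : n - 1 + 2 = n + 1 := by omega
        rw [e1, e2, hUn, hUn1] at h
        have h' : U (n - 1) = clenshawSet ε {1} {0} := h
        rw [h']
        have hstep := clenshaw_step ε hε₁ hε₂ {1} {0} ⟨1, rfl⟩ ⟨0, rfl⟩
          bddAbove_singleton bddBelow_singleton bddAbove_singleton bddBelow_singleton
        obtain ⟨hne, hDa, hDb, _⟩ := hstep
        refine ⟨hne, hDa, hDb, ?_⟩
        have hm1 : (1 + 2*ε : ℝ) ∈ clenshawSet ε {1} {0} := by
          refine ⟨1/2 + ε, ⟨by linarith, le_refl _⟩, 1, rfl, 0, rfl, by ring⟩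
        have hm2 : (1 - 2*ε : ℝ) ∈ clenshawSet ε {1} {0} := by
          refine ⟨1/2 - ε, ⟨le_refl _, by linarith⟩, 1, rfl, 0, rfl, by ring⟩
        have h1 := le_csSup hDa hm1
        have h2 := csInf_le hDb hm2
        simp only [Nat.fib_one, Nat.cast_one]
        linarith
      | (k + 2) =>
        have hk1 : k + 1 ≤ n - 1 := by omega
        have hk0 : k ≤ n - 1 := by omega
        obtain ⟨hS, hSa, hSb, hSw⟩ := ih (k + 1) (by omega) hk1
        obtain ⟨hT, hTa, hTb, hTw⟩ := ih k (by omega) hk0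
        have h := hUrec (n - (k + 2)) (by omega) (by omega)
        have e1 : n - (k + 2) + 1 = n - (k + 1) := by omega
        have e2 : n - (k + 2) + 2 = n - k := by omega
        rw [e1, e2] at h
        have h' : U (n - (k + 2)) = clenshawSet ε (U (n - (k + 1))) (U (n - k)) := h
        rw [h']
        have hstep := clenshaw_step ε hε₁ hε₂ _ _ hS hT hSa hSb hTa hTb
        obtain ⟨hne, hDa, hDb, hw⟩ := hstep
        refine ⟨hne, hDa, hDb, ?_⟩
        have hfib : (Nat.fib (k + 2) : ℝ) = (Nat.fib k : ℝ) + (Nat.fib (k+1) : ℝ) := by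
          rw [Nat.fib_add_two]; push_cast; ring
        have hfpos : (0:ℝ) ≤ (Nat.fib (k+1) : ℝ) := by positivity
        have hWS : (0:ℝ) ≤ sSup (U (n - (k + 1))) - sInf (U (n - (k + 1))) :=
          le_trans (by positivity) hSw
        rw [hfib]
        nlinarith [hw, hSw, hTw, mul_nonneg hε₁.le hWS]
  intro k hk1 hk2
  exact (key k hk2).2.2.2
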